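/- arXiv:1404.3873 — 4 statements merged into one kernel-verified Lean document; each statement's English description precedes it below -/
import Mathlib

section
/- For real q with 0 < q < 1, Z(3)^2 = 2·Z(3,3) + Z(4) + 4·Z(6), where Z(3) = Σ_{n≥1} q^n(1+q^n)/(1-q^n)^3, Z(3,3) = Σ_{n>m≥1} [q^n(1+q^n)/(1-q^n)^3]·[q^m(1+q^m)/(1-q^m)^3], Z(4) = Σ_{n≥1} q^{2n}/(1-q^n)^4, and Z(6) = Σ_{n≥1} q^{3n}/(1-q^n)^6. -/
private def Z3swapEquiv : ↥{p : ℕ × ℕ | p.1 < p.2} ≃ ↥{p : ℕ × ℕ | p.2 < p.1} :=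
  ⟨fun x => ⟨⟨x.1.2, x.1.1⟩, x.2⟩, fun x => ⟨⟨x.1.2, x.1.1⟩, x.2⟩,
    fun _ => rfl, fun _ => rfl⟩

private def Z3diagEquiv : ℕ ≃ ↥{p : ℕ × ℕ | p.1 = p.2} :=
  ⟨fun n => ⟨⟨n, n⟩, rfl⟩, fun x => x.1.1,
    fun _ => rfl, by rintro ⟨⟨a, b⟩, h⟩; cases h; rfl⟩

theorem Z3_sq (q : ℝ) (h0 : 0 < q) (h1 : q < 1) :
    (∑' n : ℕ, q ^ (n + 1) * (1 + q ^ (n + 1)) / (1 - q ^ (n + 1)) ^ 3) ^ 2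
    = 2 * (∑' p : {p : ℕ × ℕ // 1 ≤ p.2 ∧ p.2 < p.1},
        (q ^ p.1.1 * (1 + q ^ p.1.1) / (1 - q ^ p.1.1) ^ 3)
          * (q ^ p.1.2 * (1 + q ^ p.1.2) / (1 - q ^ p.1.2) ^ 3))
      + (∑' n : ℕ, q ^ (2 * (n + 1)) / (1 - q ^ (n + 1)) ^ 4)
      + 4 * ∑' n : ℕ, q ^ (3 * (n + 1)) / (1 - q ^ (n + 1)) ^ 6 := by
  have hq1 : ∀ n : ℕ, n ≠ 0 → q ^ n < 1 := fun n hn => pow_lt_one₀ h0.le h1 hn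
  have hqle1 : ∀ n : ℕ, q ^ n ≤ 1 := fun n => pow_le_one₀ h0.le h1.le
  have hqpos : ∀ n : ℕ, 0 < q ^ n := fun n => pow_pos h0 n
  have hd0 : (0:ℝ) < 1 - q := by linarith
  have hd : ∀ n : ℕ, n ≠ 0 → 0 < 1 - q ^ n := fun n hn => by linarith [hq1 n hn]
  have hdq : ∀ n : ℕ, n ≠ 0 → 1 - q ≤ 1 - q ^ n := by
    intro n hn
    have : q ^ n ≤ q ^ 1 := pow_le_pow_of_le_one h0.le h1.le (by omega)
    simp only [pow_one] at this
    linarith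
  set f : ℕ → ℝ := fun n => q ^ n * (1 + q ^ n) / (1 - q ^ n) ^ 3 with hfdef
  have hf0 : f 0 = 0 := by simp [hfdef]
  have hfnonneg : ∀ n, 0 ≤ f n := by
    intro n
    rcases Nat.eq_zero_or_pos n with h | h
    · subst h; rw [hf0]
    · apply div_nonneg
      · positivity
      · have := hd n (by omega); positivity
  have hfle : ∀ n, f n ≤ 2 / (1 - q) ^ 3 * q ^ n := by
    intro n
    rcases Nat.eq_zero_or_pos n with h | h
    · subst h; rw [hf0]; positivity
    · have hdn := hd n (by omega)
      have hdqn := hdq n (by omega)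
      rw [hfdef]
      simp only []
      rw [div_mul_eq_mul_div]
      apply div_le_div₀ (by positivity) ?_ (by positivity) ?_
      · nlinarith [hqpos n, hqle1 n]
      · exact pow_le_pow_left₀ hd0.le hdqn 3
  have hSf : Summable f :=
    Summable.of_nonneg_of_le hfnonneg hfle
      (((summable_geometric_of_lt_one h0.le h1)).mul_left _)
  have hnorm : Summable fun n => ‖f n‖ := summable_norm_iff.mpr hSf
  -- product formula
  have hg : Summable (fun p : ℕ × ℕ => f p.1 * f p.2) :=
    summable_mul_of_summable_norm hnorm hnorm
  have hprod : (∑' n, f n) * (∑' n, f n) = ∑' p : ℕ × ℕ, f p.1 * f p.2 :=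
    tsum_mul_tsum_of_summable_norm hnorm hnorm
  -- shift
  have hz : ∑' n : ℕ, f n = ∑' n : ℕ, f (n + 1) := by
    rw [Summable.tsum_eq_zero_add hSf, hf0, zero_add]
  -- the sets
  set S1 : Set (ℕ × ℕ) := {p | p.2 < p.1} with hS1def
  set S2 : Set (ℕ × ℕ) := {p | p.1 < p.2} with hS2def
  set D : Set (ℕ × ℕ) := {p | p.1 = p.2} with hDdef
  set T : Set (ℕ × ℕ) := {p | 1 ≤ p.2 ∧ p.2 < p.1} with hTdef
  set R : Set (ℕ × ℕ) := {p | p.2 = 0 ∧ 0 < p.1} with hRdef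
  have hcompl : S1ᶜ = S2 ∪ D := by
    ext p
    simp only [hS1def, hS2def, hDdef, Set.mem_compl_iff, Set.mem_setOf_eq, Set.mem_union,
      not_lt]
    omega
  have hsplit1 : (∑' x : ↑S1, f (x : ℕ × ℕ).1 * f (x : ℕ × ℕ).2)
      + (∑' x : ↑(S1ᶜ), f (x : ℕ × ℕ).1 * f (x : ℕ × ℕ).2) = ∑' p : ℕ × ℕ, f p.1 * f p.2 :=
    Summable.tsum_add_tsum_compl (hg.subtype _) (hg.subtype _)
  rw [hcompl] at hsplit1
  have hdisj2 : Disjoint S2 D := by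
    rw [Set.disjoint_left]
    rintro p hp hpd
    simp only [hS2def, hDdef, Set.mem_setOf_eq] at hp hpd
    omega
  have hsplit2 : (∑' x : ↑(S2 ∪ D), f (x : ℕ × ℕ).1 * f (x : ℕ × ℕ).2)
      = (∑' x : ↑S2, f (x : ℕ × ℕ).1 * f (x : ℕ × ℕ).2)
        + ∑' x : ↑D, f (x : ℕ × ℕ).1 * f (x : ℕ × ℕ).2 :=
    (hg.subtype _).tsum_union_disjoint hdisj2 (hg.subtype _)
  -- swap symmetry
  have hswap : (∑' x : ↑S2, f (x : ℕ × ℕ).1 * f (x : ℕ × ℕ).2)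
      = ∑' x : ↑S1, f (x : ℕ × ℕ).1 * f (x : ℕ × ℕ).2 := by
    rw [← Z3swapEquiv.tsum_eq (fun x : ↑S1 => f (x : ℕ × ℕ).1 * f (x : ℕ × ℕ).2)]
    exact tsum_congr fun x => mul_comm _ _
  -- S1 = T ∪ R and the R-part vanishes
  have hS1TR : S1 = T ∪ R := by
    ext p
    simp only [hS1def, hTdef, hRdef, Set.mem_setOf_eq, Set.mem_union]
    omega
  have hdisjTR : Disjoint T R := by
    rw [Set.disjoint_left]
    rintro p hp hpr
    simp only [hTdef, hRdef, Set.mem_setOf_eq] at hp hpr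
    omega
  have hRzero : (∑' x : ↑R, f (x : ℕ × ℕ).1 * f (x : ℕ × ℕ).2) = 0 := by
    have : ∀ x : ↑R, f (x : ℕ × ℕ).1 * f (x : ℕ × ℕ).2 = 0 := by
      rintro ⟨⟨a, b⟩, hb, ha⟩
      simp only at hb ⊢
      rw [hb, hf0, mul_zero]
    calc (∑' x : ↑R, f (x : ℕ × ℕ).1 * f (x : ℕ × ℕ).2) = ∑' _ : ↑R, (0:ℝ) :=
          tsum_congr this
      _ = 0 := tsum_zero
  have hS1T : (∑' x : ↑S1, f (x : ℕ × ℕ).1 * f (x : ℕ × ℕ).2)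
      = ∑' x : ↑T, f (x : ℕ × ℕ).1 * f (x : ℕ × ℕ).2 := by
    rw [hS1TR, (hg.subtype _).tsum_union_disjoint hdisjTR (hg.subtype _), hRzero, add_zero]
  -- diagonal
  have hdiag : (∑' x : ↑D, f (x : ℕ × ℕ).1 * f (x : ℕ × ℕ).2) = ∑' n : ℕ, f n * f n := by
    rw [← Z3diagEquiv.tsum_eq (fun x : ↑D => f (x : ℕ × ℕ).1 * f (x : ℕ × ℕ).2)]
    exact tsum_congr fun n => rfl
  -- diagonal term identity
  have hAB : ∀ n : ℕ, f (n + 1) * f (n + 1)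
      = q ^ (2 * (n + 1)) / (1 - q ^ (n + 1)) ^ 4
        + 4 * (q ^ (3 * (n + 1)) / (1 - q ^ (n + 1)) ^ 6) := by
    intro n
    have hdn : (0:ℝ) < 1 - q ^ (n + 1) := hd (n + 1) (by omega)
    have hne : (1 - q ^ (n + 1)) ≠ 0 := ne_of_gt hdn
    rw [hfdef]
    simp only []
    rw [show 2 * (n + 1) = (n + 1) * 2 by ring, show 3 * (n + 1) = (n + 1) * 3 by ring,
      pow_mul, pow_mul]
    field_simp
    ring
  have hA : Summable (fun n : ℕ => q ^ (2 * (n + 1)) / (1 - q ^ (n + 1)) ^ 4) := by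
    apply Summable.of_nonneg_of_le (f := fun n : ℕ => q / (1 - q) ^ 4 * q ^ n)
    · intro n
      have := hd (n + 1) (by omega); positivity
    · intro n
      have hdn := hd (n + 1) (by omega)
      have hdqn := hdq (n + 1) (by omega)
      rw [mul_comm (q / (1-q)^4), mul_div_assoc', mul_comm (q^n) q, ← pow_succ']
      apply div_le_div₀ (by positivity) ?_ (by positivity) ?_
      · exact pow_le_pow_of_le_one h0.le h1.le (by omega)
      · exact pow_le_pow_left₀ hd0.le hdqn 4
    · exact ((summable_geometric_of_lt_one h0.le h1)).mul_left _
  have hB : Summable (fun n : ℕ => q ^ (3 * (n + 1)) / (1 - q ^ (n + 1)) ^ 6) := by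
    apply Summable.of_nonneg_of_le (f := fun n : ℕ => q / (1 - q) ^ 6 * q ^ n)
    · intro n
      have := hd (n + 1) (by omega); positivity
    · intro n
      have hdn := hd (n + 1) (by omega)
      have hdqn := hdq (n + 1) (by omega)
      rw [mul_comm (q / (1-q)^6), mul_div_assoc', mul_comm (q^n) q, ← pow_succ']
      apply div_le_div₀ (by positivity) ?_ (by positivity) ?_
      · exact pow_le_pow_of_le_one h0.le h1.le (by omega)
      · exact pow_le_pow_left₀ hd0.le hdqn 6
    · exact ((summable_geometric_of_lt_one h0.le h1)).mul_left _
  have h2' : Summable (fun n : ℕ => f (n + 1) * f (n + 1)) := by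
    rw [funext hAB]
    exact hA.add (hB.mul_left 4)
  have h2 : Summable (fun n : ℕ => f n * f n) := (summable_nat_add_iff 1).mp h2'
  have hdiagsum : (∑' n : ℕ, f n * f n)
      = (∑' n : ℕ, q ^ (2 * (n + 1)) / (1 - q ^ (n + 1)) ^ 4)
        + 4 * ∑' n : ℕ, q ^ (3 * (n + 1)) / (1 - q ^ (n + 1)) ^ 6 := by
    rw [Summable.tsum_eq_zero_add h2, hf0, mul_zero, zero_add]
    rw [tsum_congr hAB, Summable.tsum_add hA (hB.mul_left 4), tsum_mul_left]
  -- assemble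
  have hLHS : (∑' n : ℕ, q ^ (n + 1) * (1 + q ^ (n + 1)) / (1 - q ^ (n + 1)) ^ 3)
      = ∑' n : ℕ, f (n + 1) := rfl
  have hT' : (∑' p : {p : ℕ × ℕ // 1 ≤ p.2 ∧ p.2 < p.1},
        (q ^ p.1.1 * (1 + q ^ p.1.1) / (1 - q ^ p.1.1) ^ 3)
          * (q ^ p.1.2 * (1 + q ^ p.1.2) / (1 - q ^ p.1.2) ^ 3))
      = ∑' x : ↑T, f (x : ℕ × ℕ).1 * f (x : ℕ × ℕ).2 := rfl
  rw [hLHS, hT', ← hz, sq, hprod, ← hsplit1, hsplit2, hswap, hS1T, hdiag, hdiagsum]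
  ring
end

section
/- The limit as q → 1⁻ of (1-q)^2 · Σ_{n≥1} q^n/(1-q^n)^2 equals ζ(2) = π²/6. -/
open Filter Topology Real

lemma pair_ineq {q : ℝ} (hq : 0 < q) {a b n : ℕ} (h : a + b = 2 * n) :
    2 * q ^ n ≤ q ^ a + q ^ b := by
  rcases le_total a n with hle | hle
  · obtain ⟨c, rfl⟩ : ∃ c, n = a + c := ⟨n - a, by omega⟩
    have hb : b = a + c + c := by omega
    subst hb
    have h1 : (0:ℝ) ≤ q ^ a * (1 - q ^ c) ^ 2 :=
      mul_nonneg (pow_pos hq a).le (sq_nonneg _)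
    have e1 : q ^ (a + c) = q ^ a * q ^ c := pow_add q a c
    have e2 : q ^ (a + c + c) = q ^ a * q ^ c * q ^ c := by rw [pow_add, pow_add]
    nlinarith [pow_pos hq a, pow_pos hq c]
  · obtain ⟨c, rfl⟩ : ∃ c, n = b + c := ⟨n - b, by omega⟩
    have ha : a = b + c + c := by omega
    subst ha
    have h1 : (0:ℝ) ≤ q ^ b * (1 - q ^ c) ^ 2 :=
      mul_nonneg (pow_pos hq b).le (sq_nonneg _)
    have e1 : q ^ (b + c) = q ^ b * q ^ c := pow_add q b c
    have e2 : q ^ (b + c + c) = q ^ b * q ^ c * q ^ c := by rw [pow_add, pow_add]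
    nlinarith [pow_pos hq b, pow_pos hq c]

lemma sq_sum_ge {q : ℝ} (hq : 0 < q) (n : ℕ) :
    ((n : ℝ) + 1) ^ 2 * q ^ n ≤ (∑ i ∈ Finset.range (n + 1), q ^ i) ^ 2 := by
  set S := ∑ i ∈ Finset.range (n + 1), q ^ i with hS
  have h1 : S ^ 2 = ∑ i ∈ Finset.range (n + 1), ∑ j ∈ Finset.range (n + 1), q ^ (i + j) := by
    rw [sq, Finset.sum_mul_sum]
    simp [pow_add]
  have hrefl : S = ∑ i ∈ Finset.range (n + 1), q ^ (n - i) := by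
    rw [hS]
    exact (Finset.sum_range_reflect (fun i => q ^ i) (n + 1)).symm
  have h2 : S ^ 2 = ∑ i ∈ Finset.range (n + 1), ∑ j ∈ Finset.range (n + 1),
      q ^ ((n - i) + (n - j)) := by
    conv_lhs => rw [sq, hrefl, Finset.sum_mul_sum]
    simp [pow_add]
  have key : 2 * (((n : ℝ) + 1) ^ 2 * q ^ n) ≤ S ^ 2 + S ^ 2 := by
    nth_rewrite 1 [h1]
    nth_rewrite 1 [h2]
    rw [← Finset.sum_add_distrib]
    have : ∀ i ∈ Finset.range (n + 1),
        2 * (((n : ℝ) + 1) * q ^ n) ≤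
          (∑ j ∈ Finset.range (n + 1), q ^ (i + j)) +
            ∑ j ∈ Finset.range (n + 1), q ^ ((n - i) + (n - j)) := by
      intro i hi
      rw [Finset.mem_range] at hi
      rw [← Finset.sum_add_distrib]
      have hterm : ∀ j ∈ Finset.range (n + 1),
          2 * q ^ n ≤ q ^ (i + j) + q ^ ((n - i) + (n - j)) := by
        intro j hj
        rw [Finset.mem_range] at hj
        exact pair_ineq hq (by omega)
      calc 2 * (((n : ℝ) + 1) * q ^ n)
          = ∑ _j ∈ Finset.range (n + 1), 2 * q ^ n := by
            simp [Finset.sum_const, Finset.card_range]; ring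
        _ ≤ _ := Finset.sum_le_sum hterm
    calc 2 * (((n : ℝ) + 1) ^ 2 * q ^ n)
        = ∑ _i ∈ Finset.range (n + 1), 2 * (((n : ℝ) + 1) * q ^ n) := by
          simp [Finset.sum_const, Finset.card_range]; ring
      _ ≤ _ := Finset.sum_le_sum this
  linarith

lemma key_eq {q : ℝ} (hq : q ∈ Set.Ioo (0 : ℝ) 1) (n : ℕ) :
    (1 - q) ^ 2 * (q ^ (n + 1) / (1 - q ^ (n + 1)) ^ 2) =
      q ^ (n + 1) / (∑ i ∈ Finset.range (n + 1), q ^ i) ^ 2 := by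
  obtain ⟨hq0, hq1⟩ := hq
  have hfac : 1 - q ^ (n + 1) = (1 - q) * ∑ i ∈ Finset.range (n + 1), q ^ i := by
    have := mul_geom_sum q (n + 1)
    nlinarith [this]
  have hS : (0 : ℝ) < ∑ i ∈ Finset.range (n + 1), q ^ i :=
    Finset.sum_pos (fun i _ => pow_pos hq0 i) ⟨0, by simp⟩
  have h1q : (1 : ℝ) - q ≠ 0 := by linarith
  rw [hfac, mul_pow]
  field_simp

lemma key_bound {q : ℝ} (hq : q ∈ Set.Ioo (0 : ℝ) 1) (n : ℕ) :
    q ^ (n + 1) / (∑ i ∈ Finset.range (n + 1), q ^ i) ^ 2 ≤ 1 / ((n : ℝ) + 1) ^ 2 := by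
  obtain ⟨hq0, hq1⟩ := hq
  have hS : (0 : ℝ) < ∑ i ∈ Finset.range (n + 1), q ^ i :=
    Finset.sum_pos (fun i _ => pow_pos hq0 i) ⟨0, by simp⟩
  have hn1 : (0 : ℝ) < ((n : ℝ) + 1) ^ 2 := by positivity
  rw [div_le_div_iff₀ (by positivity) hn1]
  calc q ^ (n + 1) * ((n : ℝ) + 1) ^ 2
      = ((n : ℝ) + 1) ^ 2 * (q ^ n * q) := by ring
    _ ≤ ((n : ℝ) + 1) ^ 2 * q ^ n := by
        apply mul_le_mul_of_nonneg_left _ hn1.le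
        nlinarith [pow_pos hq0 n]
    _ ≤ (∑ i ∈ Finset.range (n + 1), q ^ i) ^ 2 := sq_sum_ge hq0 n
    _ = 1 * (∑ i ∈ Finset.range (n + 1), q ^ i) ^ 2 := by ring

lemma hasSum_basel : HasSum (fun n : ℕ => 1 / ((n : ℝ) + 1) ^ 2) (π ^ 2 / 6) := by
  have h0 : HasSum (fun n : ℕ => (1 : ℝ) / (n : ℝ) ^ 2)
      (π ^ 2 / 6 + ∑ i ∈ Finset.range 1, (1 : ℝ) / (i : ℝ) ^ 2) := by
    simpa using hasSum_zeta_two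
  have := (hasSum_nat_add_iff (f := fun n : ℕ => (1 : ℝ) / (n : ℝ) ^ 2) 1).mpr h0
  simpa [Nat.cast_add] using this

theorem Z2_limit :
    Tendsto (fun q : ℝ => (1 - q) ^ 2 * ∑' n : ℕ, q ^ (n + 1) / (1 - q ^ (n + 1)) ^ 2)
      (nhdsWithin 1 (Set.Ioo 0 1)) (nhds (π ^ 2 / 6)) := by
  have hbasel := hasSum_basel
  rw [← hbasel.tsum_eq]
  have heq : (fun q : ℝ => (1 - q) ^ 2 * ∑' n : ℕ, q ^ (n + 1) / (1 - q ^ (n + 1)) ^ 2) =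
      fun q : ℝ => ∑' n : ℕ, (1 - q) ^ 2 * (q ^ (n + 1) / (1 - q ^ (n + 1)) ^ 2) := by
    funext q; rw [tsum_mul_left]
  rw [heq]
  apply tendsto_tsum_of_dominated_convergence (bound := fun n : ℕ => 1 / ((n : ℝ) + 1) ^ 2)
    hbasel.summable
  · intro n
    have hcong : ∀ᶠ q in nhdsWithin (1 : ℝ) (Set.Ioo 0 1),
        q ^ (n + 1) / (∑ i ∈ Finset.range (n + 1), q ^ i) ^ 2 =
          (1 - q) ^ 2 * (q ^ (n + 1) / (1 - q ^ (n + 1)) ^ 2) :=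
      eventually_mem_nhdsWithin.mono fun q hq => (key_eq hq n).symm
    apply Tendsto.congr' hcong
    have hcont : Tendsto (fun q : ℝ => q ^ (n + 1) / (∑ i ∈ Finset.range (n + 1), q ^ i) ^ 2)
        (nhds 1) (nhds (1 / ((n : ℝ) + 1) ^ 2)) := by
      have hc : ContinuousAt (fun q : ℝ => q ^ (n + 1) / (∑ i ∈ Finset.range (n + 1), q ^ i) ^ 2)
          1 := by
        apply ContinuousAt.div
        · fun_prop
        · fun_prop
        · have hv : (∑ i ∈ Finset.range (n + 1), (1 : ℝ) ^ i) = (n : ℝ) + 1 := by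
            simp [Finset.sum_const, Finset.card_range]
          show ((∑ i ∈ Finset.range (n + 1), (1 : ℝ) ^ i) ^ 2) ≠ 0
          rw [hv]
          have : (0:ℝ) < (n : ℝ) + 1 := by positivity
          exact pow_ne_zero 2 (ne_of_gt this)
      have : ((1 : ℝ) ^ (n + 1) / (∑ i ∈ Finset.range (n + 1), (1:ℝ) ^ i) ^ 2) =
          1 / ((n : ℝ) + 1) ^ 2 := by
        simp [Finset.sum_const, Finset.card_range]
      simpa [this] using hc.tendsto
    exact hcont.mono_left nhdsWithin_le_nhds
  · filter_upwards [eventually_mem_nhdsWithin] with q hq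
    intro n
    rw [key_eq hq n, Real.norm_eq_abs, abs_of_nonneg]
    · exact key_bound hq n
    · exact div_nonneg (pow_nonneg hq.1.le _) (sq_nonneg _)
end

section
/- The limit as q → 1⁻ of (1-q)^3 · Σ_{n≥1} q^n(1+q^n)/(1-q^n)^3 equals 2·ζ(3). -/
open Filter Topology

/-- Bernoulli-type bound: `q^k ≤ 1 / (1 + k(1-q))` for `0 < q < 1`. -/
lemma qpow_le (q : ℝ) (hq0 : 0 < q) (hq1 : q < 1) (k : ℕ) :
    q ^ k * (1 + (k : ℝ) * (1 - q)) ≤ 1 := by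
  have ha : (0:ℝ) ≤ (1 - q) / q := div_nonneg (by linarith) hq0.le
  have hB : 1 + (k : ℝ) * ((1 - q) / q) ≤ (1 + (1 - q) / q) ^ k :=
    one_add_mul_le_pow (by linarith) k
  have hq : 1 + (1 - q) / q = 1 / q := by field_simp; ring
  have hkq : (1 : ℝ) + (k : ℝ) * (1 - q) ≤ 1 + (k : ℝ) * ((1 - q) / q) := by
    have : (1 - q) ≤ (1 - q) / q := by
      rw [le_div_iff₀ hq0]; nlinarith
    nlinarith [Nat.cast_nonneg (α := ℝ) k]
  have hpow : (1 / q) ^ k = 1 / q ^ k := by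
    rw [div_pow, one_pow]
  have hqk : 0 < q ^ k := pow_pos hq0 k
  have : 1 + (k : ℝ) * (1 - q) ≤ 1 / q ^ k := by
    rw [← hpow, ← hq]; exact le_trans hkq hB
  calc q ^ k * (1 + (k : ℝ) * (1 - q)) ≤ q ^ k * (1 / q ^ k) :=
        mul_le_mul_of_nonneg_left this hqk.le
    _ = 1 := by field_simp

/-- The uniform domination bound. -/
lemma dom_bound (q : ℝ) (hq0 : 0 < q) (hq1 : q < 1) (n : ℕ) :
    (1 - q) ^ 3 * (q ^ (n + 1) * (1 + q ^ (n + 1)) / (1 - q ^ (n + 1)) ^ 3)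
      ≤ 250 / ((n : ℝ) + 1) ^ 3 := by
  set m := n + 1 with hm
  have hqm1 : q ^ m < 1 := pow_lt_one₀ hq0.le hq1 (by omega)
  have hqm0 : 0 < q ^ m := pow_pos hq0 m
  have h1qm : 0 < 1 - q ^ m := by linarith
  have hmr : (0:ℝ) < (n : ℝ) + 1 := by positivity
  rcases Nat.lt_or_ge m 3 with hm3 | hm3
  · -- small m : bound term by 2, and 2 ≤ 250/m^3
    have hle : q ^ m ≤ q := by
      calc q ^ m ≤ q ^ 1 := pow_le_pow_of_le_one hq0.le hq1.le (by omega)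
        _ = q := pow_one q
    have h1 : 1 - q ≤ 1 - q ^ m := by linarith
    have h1q : 0 < 1 - q := by linarith
    have hterm : (1 - q) ^ 3 * (q ^ m * (1 + q ^ m) / (1 - q ^ m) ^ 3) ≤ 2 := by
      rw [mul_div_assoc', div_le_iff₀ (by positivity)]
      have h3 : (1 - q) ^ 3 ≤ (1 - q ^ m) ^ 3 := pow_le_pow_left₀ h1q.le h1 3
      have hn2 : q ^ m * (1 + q ^ m) ≤ 2 := by nlinarith
      have hp : (0:ℝ) ≤ q ^ m * (1 + q ^ m) := by positivity
      have := mul_le_mul h3 hn2 hp (pow_nonneg h1qm.le 3)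
      linarith
    have h2 : (2:ℝ) ≤ 250 / ((n : ℝ) + 1) ^ 3 := by
      rw [le_div_iff₀ (by positivity)]
      have : ((n:ℝ) + 1) ≤ 2 := by
        have : n ≤ 1 := by omega
        have := (Nat.cast_le (α := ℝ)).2 this
        push_cast at this ⊢; linarith
      have h8 := pow_le_pow_left₀ (by positivity : (0:ℝ) ≤ (n:ℝ) + 1) this 3
      norm_num at h8
      linarith
    linarith
  · -- m ≥ 3 : use k = m / 3
    set k := m / 3 with hk
    have hk1 : 1 ≤ k := by omega
    have h3k : 3 * k ≤ m := by omega
    have h5k : m ≤ 5 * k := by omega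
    have hkr : (0:ℝ) < (k : ℝ) := by exact_mod_cast hk1
    set y := (k : ℝ) * (1 - q) with hy
    have hy0 : 0 < y := by
      have : 0 < 1 - q := by linarith
      positivity
    have hqk : q ^ k * (1 + y) ≤ 1 := qpow_le q hq0 hq1 k
    have hqk' : q ^ k ≤ 1 / (1 + y) := by
      rw [le_div_iff₀ (by linarith)]; exact hqk
    -- q^m ≤ (q^k)^3 ≤ 1/(1+y)^3
    have hq3k : q ^ m ≤ (q ^ k) ^ 3 := by
      rw [← pow_mul]
      exact pow_le_pow_of_le_one hq0.le hq1.le (by omega)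
    have hqm_le : q ^ m ≤ 1 / (1 + y) ^ 3 := by
      calc q ^ m ≤ (q ^ k) ^ 3 := hq3k
        _ ≤ (1 / (1 + y)) ^ 3 := pow_le_pow_left₀ (pow_pos hq0 k).le hqk' 3
        _ = 1 / (1 + y) ^ 3 := by rw [div_pow, one_pow]
    -- 1 - q^m ≥ y/(1+y)
    have hqmk : q ^ m ≤ q ^ k :=
      pow_le_pow_of_le_one hq0.le hq1.le (by omega)
    have hlow : y / (1 + y) ≤ 1 - q ^ m := by
      have h1y : 0 < 1 + y := by linarith
      have heq : y / (1 + y) = 1 - 1 / (1 + y) := by field_simp; ring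
      rw [heq]
      have := le_trans hqmk hqk'
      linarith
    have h1y : (0:ℝ) < 1 + y := by linarith
    -- main estimate
    have hterm : (1 - q) ^ 3 * (q ^ m * (1 + q ^ m) / (1 - q ^ m) ^ 3) ≤ 2 / (k:ℝ)^3 := by
      have hnum : q ^ m * (1 + q ^ m) ≤ 2 / (1 + y) ^ 3 := by
        have h2 : 1 + q ^ m ≤ 2 := by linarith
        calc q ^ m * (1 + q ^ m) ≤ (1 / (1 + y) ^ 3) * 2 := by
              apply mul_le_mul hqm_le h2 (by linarith) (by positivity)
          _ = 2 / (1 + y) ^ 3 := by ring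
      have hden : (y / (1 + y)) ^ 3 ≤ (1 - q ^ m) ^ 3 :=
        pow_le_pow_left₀ (by positivity) hlow 3
      have hdenpos : (0:ℝ) < (y / (1 + y)) ^ 3 := by positivity
      have hstep : q ^ m * (1 + q ^ m) / (1 - q ^ m) ^ 3
          ≤ (2 / (1 + y) ^ 3) / ((y / (1 + y)) ^ 3) := by
        apply div_le_div₀ (by positivity) hnum hdenpos hden
      have heq2 : (2 / (1 + y) ^ 3) / ((y / (1 + y)) ^ 3) = 2 / y ^ 3 := by
        field_simp

      have h1q : 0 < 1 - q := by linarith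
      calc (1 - q) ^ 3 * (q ^ m * (1 + q ^ m) / (1 - q ^ m) ^ 3)
          ≤ (1 - q) ^ 3 * (2 / y ^ 3) := by
            rw [← heq2]
            exact mul_le_mul_of_nonneg_left hstep (by positivity)
        _ = 2 / (k:ℝ)^3 := by
            rw [hy]; field_simp
    have hfin : 2 / (k:ℝ)^3 ≤ 250 / ((n:ℝ) + 1) ^ 3 := by
      rw [div_le_div_iff₀ (by positivity) (by positivity)]
      have h5 : ((n:ℝ) + 1) ≤ 5 * (k:ℝ) := by
        have := (Nat.cast_le (α := ℝ)).2 h5k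
        push_cast [hm] at this; linarith
      nlinarith [pow_le_pow_left₀ hmr.le h5 3, hkr]
    linarith

theorem Z3_limit :
    Tendsto (fun q : ℝ =>
        (1 - q) ^ 3 * ∑' n : ℕ, q ^ (n + 1) * (1 + q ^ (n + 1)) / (1 - q ^ (n + 1)) ^ 3)
      (nhdsWithin 1 (Set.Ioo 0 1)) (nhds (2 * ∑' n : ℕ, 1 / ((n : ℝ) + 1) ^ 3)) := by
  have hRHS : (2:ℝ) * ∑' n : ℕ, 1 / ((n : ℝ) + 1) ^ 3
      = ∑' n : ℕ, 2 * (1 / ((n : ℝ) + 1) ^ 3) := tsum_mul_left.symm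
  have hLHS : ∀ q : ℝ,
      (1 - q) ^ 3 * ∑' n : ℕ, q ^ (n + 1) * (1 + q ^ (n + 1)) / (1 - q ^ (n + 1)) ^ 3
      = ∑' n : ℕ, (1 - q) ^ 3 * (q ^ (n + 1) * (1 + q ^ (n + 1)) / (1 - q ^ (n + 1)) ^ 3) :=
    fun q => tsum_mul_left.symm
  rw [hRHS]
  simp only [hLHS]
  refine tendsto_tsum_of_dominated_convergence
    (f := fun (q : ℝ) (n : ℕ) =>
      (1 - q) ^ 3 * (q ^ (n + 1) * (1 + q ^ (n + 1)) / (1 - q ^ (n + 1)) ^ 3))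
    (g := fun n : ℕ => 2 * (1 / ((n : ℝ) + 1) ^ 3))
    (bound := fun n => 250 / ((n : ℝ) + 1) ^ 3) ?_ ?_ ?_
  · -- summability of bound
    have h1 : Summable (fun n : ℕ => 1 / (n : ℝ) ^ 3) :=
      Real.summable_one_div_nat_pow.2 (by norm_num)
    have h2 : Summable (fun n : ℕ => 1 / ((n : ℝ) + 1) ^ 3) := by
      have := (summable_nat_add_iff 1).2 h1
      simpa [Nat.cast_add] using this
    simpa [div_eq_mul_inv, one_mul] using h2.mul_left 250
  · -- pointwise limit
    intro n
    set m := n + 1 with hm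
    have hmne : ((m:ℝ)) ≠ 0 := by positivity
    have hcont : Tendsto
        (fun q : ℝ => q ^ m * (1 + q ^ m) / (∑ i ∈ Finset.range m, q ^ i) ^ 3)
        (nhdsWithin 1 (Set.Ioo 0 1)) (nhds (2 * (1 / ((n : ℝ) + 1) ^ 3))) := by
      have hc : ContinuousAt
          (fun q : ℝ => q ^ m * (1 + q ^ m) / (∑ i ∈ Finset.range m, q ^ i) ^ 3) 1 := by
        apply ContinuousAt.div
        · fun_prop
        · fun_prop
        · simp [Finset.sum_const, Finset.card_range]
      have hval : (fun q : ℝ => q ^ m * (1 + q ^ m) / (∑ i ∈ Finset.range m, q ^ i) ^ 3) 1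
          = 2 * (1 / ((n : ℝ) + 1) ^ 3) := by
        simp [Finset.sum_const, Finset.card_range, hm]
        ring
      exact hval ▸ hc.continuousWithinAt.tendsto
    apply hcont.congr'
    filter_upwards [eventually_mem_nhdsWithin] with q hq
    obtain ⟨hq0, hq1⟩ := hq
    have hgeom : (1 - q) * ∑ i ∈ Finset.range m, q ^ i = 1 - q ^ m := by
      have := geom_sum_mul q m
      nlinarith [this]
    have hS : 0 < ∑ i ∈ Finset.range m, q ^ i := by
      apply Finset.sum_pos (fun i _ => pow_pos hq0 i)
      exact ⟨0, Finset.mem_range.2 (by omega)⟩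
    have h1q : (1:ℝ) - q ≠ 0 := by linarith
    rw [← hgeom, mul_pow]
    rw [mul_div_assoc']
    rw [eq_div_iff (by positivity)]
    field_simp
  · -- bound
    filter_upwards [eventually_mem_nhdsWithin] with q hq n
    obtain ⟨hq0, hq1⟩ := hq
    rw [Real.norm_eq_abs, abs_of_nonneg]
    · exact dom_bound q hq0 hq1 n
    · have hqm1 : q ^ (n+1) < 1 := pow_lt_one₀ hq0.le hq1 (by omega)
      have h2 : (0:ℝ) < 1 - q ^ (n+1) := by linarith
      have h3 : (0:ℝ) < q ^ (n+1) := pow_pos hq0 _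
      have h1 : (0:ℝ) < 1 - q := by linarith
      apply mul_nonneg (pow_nonneg h1.le 3)
      apply div_nonneg (mul_nonneg h3.le (by linarith)) (pow_nonneg h2.le 3)
end

section
/- For every integer s ≥ 2 and 0 < q < 1, the series Z(s) = Σ_{n≥1} p_s(q^n)/(1-q^n)^s converges, and (1-q)^s · Z(s) tends to 2^{ε(s)}·ζ(s) as q → 1⁻, where ε(s) = 1 if s is odd and 0 if s is even. -/
open Filter Topology Finset

noncomputable def ps (s : ℕ) (t : ℝ) : ℝ :=
  if Even s then t ^ (s / 2) else t ^ ((s - 1) / 2) * (1 + t)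

lemma ps_nonneg (s : ℕ) {t : ℝ} (ht : 0 ≤ t) : 0 ≤ ps s t := by
  unfold ps; split <;> positivity

lemma geom_key (q : ℝ) (hq : 0 ≤ q) (n : ℕ) :
    (n : ℝ) ^ 2 * q ^ (n - 1) ≤ (∑ i ∈ Finset.range n, q ^ i) ^ 2 := by
  set r := Real.sqrt q with hr
  have hr0 : 0 ≤ r := Real.sqrt_nonneg q
  have hrq : r ^ 2 = q := Real.sq_sqrt hq
  have hsum : (n : ℝ) * r ^ (n - 1) ≤ ∑ i ∈ Finset.range n, q ^ i := by
    have h2 : ∀ i ∈ Finset.range n, 2 * r ^ (n - 1) ≤ q ^ i + q ^ (n - 1 - i) := by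
      intro i hi
      rw [Finset.mem_range] at hi
      have hqi : q ^ i = (r ^ i) ^ 2 := by rw [← pow_mul, mul_comm, pow_mul, hrq]
      have hqj : q ^ (n - 1 - i) = (r ^ (n - 1 - i)) ^ 2 := by
        rw [← pow_mul, mul_comm, pow_mul, hrq]
      have h3 := two_mul_le_add_sq (r ^ i) (r ^ (n - 1 - i))
      rw [hqi, hqj]
      calc 2 * r ^ (n - 1) = 2 * (r ^ i * r ^ (n - 1 - i)) := by
            rw [← pow_add]; congr 2; omega
        _ ≤ _ := by nlinarith
    have h4 := Finset.sum_le_sum h2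
    rw [Finset.sum_const, Finset.sum_add_distrib,
      Finset.sum_range_reflect (fun i => q ^ i) n] at h4
    simp only [nsmul_eq_mul, Finset.card_range] at h4
    linarith
  have hL : (n : ℝ) ^ 2 * q ^ (n - 1) = ((n : ℝ) * r ^ (n - 1)) ^ 2 := by
    rw [mul_pow, ← pow_mul, mul_comm (n - 1) 2, pow_mul, hrq]
  rw [hL]
  exact pow_le_pow_left₀ (by positivity) hsum 2

lemma geom_identity (q : ℝ) (n : ℕ) :
    (1 : ℝ) - q ^ (n + 1) = (1 - q) * ∑ i ∈ Finset.range (n + 1), q ^ i := by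
  have := geom_sum_mul q (n + 1)
  linear_combination this

theorem test : True := trivial

lemma S_pos {q : ℝ} (hq0 : 0 < q) (n : ℕ) :
    (1 : ℝ) ≤ ∑ i ∈ Finset.range (n + 1), q ^ i := by
  have := Finset.single_le_sum (f := fun i => q ^ i)
    (fun i _ => pow_nonneg hq0.le i) (Finset.mem_range.2 (Nat.succ_pos n))
  simpa using this

lemma term_eq (s n : ℕ) {q : ℝ} (hq1 : q < 1) :
    (1 - q) ^ s * (ps s (q ^ (n + 1)) / (1 - q ^ (n + 1)) ^ s)
      = ps s (q ^ (n + 1)) / (∑ i ∈ Finset.range (n + 1), q ^ i) ^ s := by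
  have h1q : (1 : ℝ) - q ≠ 0 := ne_of_gt (by linarith)
  rw [geom_identity, mul_pow, mul_div_assoc',
    mul_div_mul_left _ _ (pow_ne_zero s h1q)]

lemma main_bound (s : ℕ) (hs : 2 ≤ s) {q : ℝ} (hq0 : 0 < q) (hq1 : q < 1) (n : ℕ) :
    ps s (q ^ (n + 1)) / (∑ i ∈ Finset.range (n + 1), q ^ i) ^ s
      ≤ 2 / ((n : ℝ) + 1) ^ 2 := by
  set S := ∑ i ∈ Finset.range (n + 1), q ^ i with hS
  set A : ℝ := (n : ℝ) + 1 with hA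
  have hq0' : (0 : ℝ) ≤ q := hq0.le
  have hS1 : (1 : ℝ) ≤ S := S_pos hq0 n
  have hS0 : (0 : ℝ) < S := lt_of_lt_of_le one_pos hS1
  have hA1 : (1 : ℝ) ≤ A := by rw [hA]; linarith [(by positivity : (0:ℝ) ≤ (n:ℝ))]
  have hA0 : (0 : ℝ) < A := lt_of_lt_of_le one_pos hA1
  have hkey : A ^ 2 * q ^ n ≤ S ^ 2 := by
    have := geom_key q hq0' (n + 1)
    simpa [hA, hS] using this
  have hA2 : (1 : ℝ) ≤ A ^ 2 := one_le_pow₀ hA1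
  have hqn1 : q ^ (n + 1) ≤ 1 := pow_le_one₀ hq0' hq1.le
  have hqn1' : (0:ℝ) ≤ q ^ (n+1) := by positivity
  rcases Nat.even_or_odd s with he | ho
  · obtain ⟨m, hm⟩ := he
    have hm1 : 1 ≤ m := by omega
    have hps : ps s (q ^ (n + 1)) = (q ^ (n + 1)) ^ m := by
      unfold ps; rw [if_pos ⟨m, hm⟩]; congr 1; omega
    rw [hps, div_le_div_iff₀ (by positivity) (by positivity)]
    have h1 : (A ^ 2 * q ^ n) ^ m ≤ S ^ s := by
      have := pow_le_pow_left₀ (by positivity) hkey m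
      rwa [← pow_mul, show 2 * m = s by omega] at this
    have hA2m : A ^ 2 ≤ (A ^ 2) ^ m := le_self_pow₀ hA2 (by omega)
    have hqm : q ^ m ≤ 1 := pow_le_one₀ hq0' hq1.le
    calc (q ^ (n + 1)) ^ m * A ^ 2
        = (q ^ n) ^ m * (q ^ m * A ^ 2) := by
          rw [← pow_mul, ← pow_mul, show (n + 1) * m = n * m + m by ring, pow_add]; ring
      _ ≤ (q ^ n) ^ m * (1 * (A ^ 2) ^ m) := by gcongr
      _ = (A ^ 2 * q ^ n) ^ m := by rw [mul_pow]; ring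
      _ ≤ S ^ s := h1
      _ ≤ 2 * S ^ s := by nlinarith [pow_pos hS0 s]
  · obtain ⟨m, hm⟩ := ho
    have hm1 : 1 ≤ m := by omega
    have hps : ps s (q ^ (n + 1)) = (q ^ (n + 1)) ^ m * (1 + q ^ (n + 1)) := by
      unfold ps
      rw [if_neg (by simpa [Nat.even_iff, Nat.odd_iff.mp ⟨m, hm⟩] using (by omega : ¬ s % 2 = 0))]
      congr 2; omega
    rw [hps, div_le_div_iff₀ (by positivity) (by positivity)]
    have h1 : (A ^ 2 * q ^ n) ^ m ≤ (S ^ 2) ^ m :=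
      pow_le_pow_left₀ (by positivity) hkey m
    have hss : S ^ s = (S ^ 2) ^ m * S := by
      rw [← pow_mul, ← pow_succ, hm]
    have hA2m : A ^ 2 ≤ (A ^ 2) ^ m := le_self_pow₀ hA2 (by omega)
    have hqm : q ^ m ≤ 1 := pow_le_one₀ hq0' hq1.le
    calc (q ^ (n + 1)) ^ m * (1 + q ^ (n + 1)) * A ^ 2
        = (q ^ n) ^ m * (q ^ m * (1 + q ^ (n + 1))) * A ^ 2 := by
          rw [← pow_mul, ← pow_mul, show (n + 1) * m = n * m + m by ring, pow_add]; ring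
      _ ≤ (q ^ n) ^ m * 2 * (A ^ 2) ^ m := by
          apply mul_le_mul _ hA2m (by positivity) (by positivity)
          apply mul_le_mul_of_nonneg_left _ (by positivity)
          nlinarith
      _ = 2 * ((A ^ 2 * q ^ n) ^ m * 1) := by rw [mul_pow]; ring
      _ ≤ 2 * ((S ^ 2) ^ m * S) := by gcongr
      _ = 2 * S ^ s := by rw [hss]

lemma ps_cont (s : ℕ) : Continuous fun t : ℝ => ps s t := by
  unfold ps
  by_cases h : Even s
  · simp only [if_pos h]; fun_prop
  · simp only [if_neg h]; fun_prop

lemma ps_one (s : ℕ) : ps s 1 = if Odd s then 2 else 1 := by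
  unfold ps
  rcases Nat.even_or_odd s with h | h
  · simp [h, Nat.not_odd_iff_even.mpr h]
  · simp [Nat.not_even_iff_odd.mpr h, h]
    norm_num

lemma term_tendsto (s : ℕ) (n : ℕ) :
    Tendsto (fun q : ℝ => (1 - q) ^ s * (ps s (q ^ (n + 1)) / (1 - q ^ (n + 1)) ^ s))
      (nhdsWithin 1 (Set.Ioo 0 1))
      (nhds ((if Odd s then 2 else 1) * (1 / ((n : ℝ) + 1) ^ s))) := by
  have hc : ContinuousAt
      (fun q : ℝ => ps s (q ^ (n + 1)) / (∑ i ∈ Finset.range (n + 1), q ^ i) ^ s) 1 := by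
    apply ContinuousAt.div
    · exact ((ps_cont s).comp (continuous_pow (n + 1))).continuousAt
    · exact (Continuous.pow (continuous_finset_sum _ (fun i _ => continuous_pow i)) s).continuousAt
    · simp only [one_pow, Finset.sum_const, Finset.card_range, nsmul_eq_mul, mul_one]
      positivity
  have h1 : (fun q : ℝ => ps s (q ^ (n + 1)) / (∑ i ∈ Finset.range (n + 1), q ^ i) ^ s) 1
      = (if Odd s then 2 else 1) * (1 / ((n : ℝ) + 1) ^ s) := by
    simp [ps_one, mul_one_div]
    split <;> simp [div_eq_mul_inv]
  have hg : Tendsto (fun q : ℝ => ps s (q ^ (n + 1)) / (∑ i ∈ Finset.range (n + 1), q ^ i) ^ s)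
      (nhdsWithin 1 (Set.Ioo 0 1))
      (nhds ((if Odd s then 2 else 1) * (1 / ((n : ℝ) + 1) ^ s))) := by
    rw [← h1]
    exact hc.tendsto.mono_left nhdsWithin_le_nhds
  apply hg.congr'
  filter_upwards [self_mem_nhdsWithin] with q hq
  exact (term_eq s n hq.2).symm

lemma base_summable : Summable (fun n : ℕ => 2 / ((n : ℝ) + 1) ^ 2) := by
  have h : Summable (fun n : ℕ => 1 / ((n : ℝ) + 1) ^ 2) := by
    have := (summable_nat_add_iff (f := fun n : ℕ => 1 / (n : ℝ) ^ 2) 1).mpr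
      (Real.summable_one_div_nat_pow.mpr one_lt_two)
    apply this.congr
    intro n; push_cast; ring
  simpa [div_eq_mul_inv, mul_comm] using h.mul_left 2

theorem Zs_summable_and_limit (s : ℕ) (hs : 2 ≤ s) :
    (∀ q : ℝ, 0 < q → q < 1 →
      Summable (fun n : ℕ => ps s (q ^ (n + 1)) / (1 - q ^ (n + 1)) ^ s)) ∧
    Tendsto (fun q : ℝ =>
        (1 - q) ^ s * ∑' n : ℕ, ps s (q ^ (n + 1)) / (1 - q ^ (n + 1)) ^ s)
      (nhdsWithin 1 (Set.Ioo 0 1))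
      (nhds ((if Odd s then 2 else 1) * ∑' n : ℕ, 1 / ((n : ℝ) + 1) ^ s)) := by
  have hnn : ∀ q : ℝ, 0 < q → q < 1 → ∀ n : ℕ,
      0 ≤ ps s (q ^ (n + 1)) / (1 - q ^ (n + 1)) ^ s := by
    intro q hq0 hq1 n
    have hlt : q ^ (n + 1) < 1 := pow_lt_one₀ hq0.le hq1 (Nat.succ_ne_zero n)
    have : (0:ℝ) < 1 - q ^ (n + 1) := by linarith
    exact div_nonneg (ps_nonneg s (by positivity)) (by positivity)
  constructor
  · intro q hq0 hq1
    have hpow : (0:ℝ) < (1 - q) ^ s := by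
      have : (0:ℝ) < 1 - q := by linarith
      positivity
    refine Summable.of_nonneg_of_le (hnn q hq0 hq1) (fun n => ?_)
      ((base_summable.div_const ((1 - q) ^ s)))
    rw [le_div_iff₀ hpow, mul_comm, term_eq s n hq1]
    exact main_bound s hs hq0 hq1 n
  · simp only [← tsum_mul_left]
    apply tendsto_tsum_of_dominated_convergence
      (bound := fun n : ℕ => 2 / ((n : ℝ) + 1) ^ 2) base_summable
    · intro n
      exact term_tendsto s n
    · filter_upwards [self_mem_nhdsWithin] with q hq
      intro n
      have hq0 := hq.1; have hq1 := hq.2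
      have h0 : 0 ≤ (1 - q) ^ s * (ps s (q ^ (n + 1)) / (1 - q ^ (n + 1)) ^ s) := by
        have : (0:ℝ) ≤ 1 - q := by linarith
        exact mul_nonneg (by positivity) (hnn q hq0 hq1 n)
      rw [Real.norm_of_nonneg h0, term_eq s n hq1]
      exact main_bound s hs hq0 hq1 n
end
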